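/- Let p be a prime and suppose sequences (b_n)_{n≥0} in ℤ_(p) satisfy b_{ℓp^r} ≡ b_{ℓp^{r-1}} (mod p^r) for all ℓ, r ≥ 1. Let Ω(x) = Σ_{n≥0} b_n x^{n-1} dx and let t ∈ ℤ_(p)[[u]] have t(0) = 0 and unit linear coefficient. Then there exists Ψ ∈ ℤ_(p)[[u]] such that, as formal Laurent series in u, Σ_{n≥0} b_n·(t(u)^{n-1}·t'(u) − t(u^p)^{n-1}·t'(u^p)·p·u^{p-1}/p) equals Ψ'(u); that is, Ω(t(u)) − (1/p)·Ω(t(u^p)) is an exact differential dΨ with Ψ ∈ ℤ_(p)[[u]]. -/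

import Mathlib

open PowerSeries Finset

/-- `x ∈ ℤ_(p)`: `x` is a rational number whose denominator is prime to `p`. -/
def PInt (p : ℕ) (x : ℚ) : Prop := ∃ a b : ℤ, ¬ (p : ℤ) ∣ b ∧ (b : ℚ) * x = (a : ℚ)

/-- `x ∈ p^r·ℤ_(p)`. -/
def PMem (p : ℕ) (r : ℕ) (x : ℚ) : Prop :=
  ∃ a b : ℤ, ¬ (p : ℤ) ∣ b ∧ (b : ℚ) * x = (p : ℚ) ^ r * a

/-- Composition of a power series with `u ↦ u^p`. -/
noncomputable def substPow (p : ℕ) (t : PowerSeries ℚ) : PowerSeries ℚ :=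
  PowerSeries.mk fun n => if p ∣ n then coeff (R := ℚ) (n / p) t else 0

/-- The operator `θ = u·d/du` on power series. -/
noncomputable def theta (f : PowerSeries ℚ) : PowerSeries ℚ :=
  PowerSeries.mk fun n => (n : ℚ) * coeff (R := ℚ) n f

section Arith
variable {p : ℕ}

lemma int_prime (hp : p.Prime) : Prime (p : ℤ) := Nat.prime_iff_prime_int.mp hp

lemma not_dvd_one' (hp : p.Prime) : ¬ (p : ℤ) ∣ (1 : ℤ) := (int_prime hp).not_dvd_one

lemma pint_intCast (hp : p.Prime) (a : ℤ) : PInt p (a : ℚ) :=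
  ⟨a, 1, not_dvd_one' hp, by push_cast; ring⟩

lemma pint_zero (hp : p.Prime) : PInt p 0 := by simpa using pint_intCast hp 0
lemma pint_one (hp : p.Prime) : PInt p 1 := by simpa using pint_intCast hp 1
lemma pint_natCast (hp : p.Prime) (n : ℕ) : PInt p (n : ℚ) := by
  simpa using pint_intCast hp (n : ℤ)

lemma b_ne_zero {b : ℤ} (hb : ¬ (p : ℤ) ∣ b) : b ≠ 0 := fun h => hb (h ▸ dvd_zero _)

lemma b_ne_zero' {b : ℤ} (hb : ¬ (p : ℤ) ∣ b) : (b : ℚ) ≠ 0 :=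
  Int.cast_ne_zero.mpr (b_ne_zero hb)

lemma not_dvd_mul (hp : p.Prime) {b c : ℤ} (hb : ¬ (p : ℤ) ∣ b) (hc : ¬ (p : ℤ) ∣ c) :
    ¬ (p : ℤ) ∣ b * c := fun h => ((int_prime hp).dvd_mul.mp h).elim hb hc

lemma pint_add (hp : p.Prime) {x y : ℚ} (hx : PInt p x) (hy : PInt p y) : PInt p (x + y) := by
  obtain ⟨a1, b1, hb1, e1⟩ := hx
  obtain ⟨a2, b2, hb2, e2⟩ := hy
  exact ⟨a1 * b2 + a2 * b1, b1 * b2, not_dvd_mul hp hb1 hb2, by push_cast; linear_combination (b2:ℚ) * e1 + (b1:ℚ) * e2⟩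

lemma pint_mul (hp : p.Prime) {x y : ℚ} (hx : PInt p x) (hy : PInt p y) : PInt p (x * y) := by
  obtain ⟨a1, b1, hb1, e1⟩ := hx
  obtain ⟨a2, b2, hb2, e2⟩ := hy
  exact ⟨a1 * a2, b1 * b2, not_dvd_mul hp hb1 hb2, by push_cast; linear_combination ((b2:ℚ)*y) * e1 + (a1:ℚ) * e2⟩

lemma pint_neg (hp : p.Prime) {x : ℚ} (hx : PInt p x) : PInt p (-x) := by
  obtain ⟨a, b, hb, e⟩ := hx
  exact ⟨-a, b, hb, by push_cast; linear_combination -e⟩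

lemma pint_sub (hp : p.Prime) {x y : ℚ} (hx : PInt p x) (hy : PInt p y) : PInt p (x - y) := by
  simpa [sub_eq_add_neg] using pint_add hp hx (pint_neg hp hy)

lemma pint_sum (hp : p.Prime) {α : Type*} {s : Finset α} {f : α → ℚ} (h : ∀ i ∈ s, PInt p (f i)) :
    PInt p (∑ i ∈ s, f i) := by
  classical
  induction s using Finset.cons_induction with
  | empty => simpa using pint_zero hp
  | cons a s ha ih =>
      rw [Finset.sum_cons]
      exact pint_add hp (h _ (Finset.mem_cons_self _ s))
        (ih fun i hi => h i (Finset.mem_cons_of_mem hi))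

lemma pmem_zero_iff {x : ℚ} : PMem p 0 x ↔ PInt p x := by
  unfold PMem PInt; simp

lemma pmem_zero (hp : p.Prime) (r : ℕ) : PMem p r 0 :=
  ⟨0, 1, not_dvd_one' hp, by norm_num⟩

lemma pint_of_pmem {r : ℕ} {x : ℚ} (hx : PMem p r x) : PInt p x := by
  obtain ⟨a, b, hb, e⟩ := hx
  exact ⟨p ^ r * a, b, hb, by push_cast; linear_combination e⟩

lemma pmem_add (hp : p.Prime) {r : ℕ} {x y : ℚ} (hx : PMem p r x) (hy : PMem p r y) :
    PMem p r (x + y) := by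
  obtain ⟨a1, b1, hb1, e1⟩ := hx
  obtain ⟨a2, b2, hb2, e2⟩ := hy
  exact ⟨a1 * b2 + a2 * b1, b1 * b2, not_dvd_mul hp hb1 hb2, by push_cast; linear_combination (b2:ℚ) * e1 + (b1:ℚ) * e2⟩

lemma pmem_sum (hp : p.Prime) {r : ℕ} {α : Type*} {s : Finset α} {f : α → ℚ}
    (h : ∀ i ∈ s, PMem p r (f i)) : PMem p r (∑ i ∈ s, f i) := by
  classical
  induction s using Finset.cons_induction with
  | empty => simpa using pmem_zero hp r
  | cons a s ha ih =>
      rw [Finset.sum_cons]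
      exact pmem_add hp (h _ (Finset.mem_cons_self _ s))
        (ih fun i hi => h i (Finset.mem_cons_of_mem hi))

lemma pmem_mul (hp : p.Prime) {r s : ℕ} {x y : ℚ} (hx : PMem p r x) (hy : PMem p s y) :
    PMem p (r + s) (x * y) := by
  obtain ⟨a1, b1, hb1, e1⟩ := hx
  obtain ⟨a2, b2, hb2, e2⟩ := hy
  refine ⟨a1 * a2, b1 * b2, not_dvd_mul hp hb1 hb2, ?_⟩
  push_cast
  rw [pow_add]
  linear_combination ((b2:ℚ)*y) * e1 + ((p:ℚ)^r*(a1:ℚ)) * e2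

lemma pmem_mul_pint (hp : p.Prime) {r : ℕ} {x y : ℚ} (hx : PMem p r x) (hy : PInt p y) :
    PMem p r (x * y) := by
  have := pmem_mul hp hx (pmem_zero_iff.mpr hy)
  simpa using this

lemma pint_mul_pmem (hp : p.Prime) {r : ℕ} {x y : ℚ} (hx : PInt p x) (hy : PMem p r y) :
    PMem p r (x * y) := by
  rw [mul_comm]; exact pmem_mul_pint hp hy hx

lemma pmem_mono (hp : p.Prime) {r s : ℕ} (hrs : s ≤ r) {x : ℚ} (hx : PMem p r x) : PMem p s x := by
  obtain ⟨a, b, hb, e⟩ := hx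
  refine ⟨p ^ (r - s) * a, b, hb, ?_⟩
  push_cast
  rw [e, ← mul_assoc, ← pow_add]
  congr 2
  omega

lemma pmem_neg (hp : p.Prime) {r : ℕ} {x : ℚ} (hx : PMem p r x) : PMem p r (-x) := by
  obtain ⟨a, b, hb, e⟩ := hx
  exact ⟨-a, b, hb, by push_cast; linear_combination -e⟩

lemma pmem_sub (hp : p.Prime) {r : ℕ} {x y : ℚ} (hx : PMem p r x) (hy : PMem p r y) :
    PMem p r (x - y) := by
  simpa [sub_eq_add_neg] using pmem_add hp hx (pmem_neg hp hy)

lemma pmem_p_mul (hp : p.Prime) {r : ℕ} {x : ℚ} (hx : PMem p r x) : PMem p (r + 1) ((p : ℚ) * x) := by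
  have h1 : PMem p 1 ((p : ℚ)) := ⟨1, 1, not_dvd_one' hp, by push_cast; ring⟩
  simpa [add_comm] using pmem_mul hp h1 hx

/-- Main division lemma: if `x ∈ p^r ℤ_(p)` and `v_p(n) ≤ r` then `x/n ∈ ℤ_(p)`. -/
lemma pmem_div_nat (hp : p.Prime) {r : ℕ} {x : ℚ} (hx : PMem p r x) {n : ℕ} (hn : n ≠ 0)
    (hfac : n.factorization p ≤ r) : PInt p (x / n) := by
  obtain ⟨a, b, hb, e⟩ := hx
  set s := n.factorization p with hs
  set ℓ : ℕ := n / p ^ s with hl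
  have hnl : p ^ s * ℓ = n := Nat.ordProj_mul_ordCompl_eq_self n p
  have hpl : ¬ p ∣ ℓ := Nat.not_dvd_ordCompl hp hn
  have hplz : ¬ (p : ℤ) ∣ (ℓ : ℤ) := by
    rw [Int.natCast_dvd_natCast]; exact hpl
  refine ⟨p ^ (r - s) * a, b * ℓ, not_dvd_mul hp hb hplz, ?_⟩
  have hn0 : (n : ℚ) ≠ 0 := Nat.cast_ne_zero.mpr hn
  have hp0 : (p : ℚ) ≠ 0 := Nat.cast_ne_zero.mpr hp.ne_zero
  have hnq : (p : ℚ) ^ s * (ℓ : ℚ) = (n : ℚ) := by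
    push_cast [← hnl]; ring
  have hprs : (p : ℚ) ^ r = (p : ℚ) ^ (r - s) * (p : ℚ) ^ s := by
    rw [← pow_add]; congr 1; omega
  have hb0 : (b : ℚ) ≠ 0 := b_ne_zero' hb
  have hl0 : (ℓ : ℚ) ≠ 0 := Nat.cast_ne_zero.mpr (fun h => hpl (h ▸ dvd_zero p))
  have hps0 : (p : ℚ) ^ s ≠ 0 := pow_ne_zero _ hp0
  have key : ((b:ℚ) * (ℓ:ℚ)) * (x / ↑n) = ((b:ℚ) * x) / (p:ℚ)^s := by
    rw [← hnq]; field_simp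
  push_cast
  rw [key, e, hprs]
  field_simp

lemma pint_pow_div (hp : p.Prime) (j : ℕ) (hj : 1 ≤ j) : PInt p ((p : ℚ) ^ (j - 1) / j) := by
  have hpm : PMem p (j - 1) ((p : ℚ) ^ (j - 1)) := ⟨1, 1, not_dvd_one' hp, by push_cast; ring⟩
  have hfac : j.factorization p ≤ j - 1 := by
    set s := j.factorization p with hs
    have h1 : p ^ s ∣ j := Nat.ordProj_dvd j p
    have h2 : p ^ s ≤ j := Nat.le_of_dvd (by omega) h1
    have h3 : s < p ^ s := Nat.lt_pow_self (n := s) hp.one_lt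
    omega
  exact pmem_div_nat hp hpm (n := j) (by omega) hfac

lemma fermat_int (hp : p.Prime) (a : ℤ) : (p : ℤ) ∣ a ^ p - a := by
  haveI : Fact p.Prime := ⟨hp⟩
  have : ((a ^ p - a : ℤ) : ZMod p) = 0 := by
    push_cast
    rw [ZMod.pow_card]
    ring
  exact (ZMod.intCast_zmod_eq_zero_iff_dvd _ p).mp this

lemma fermat_rat (hp : p.Prime) {x : ℚ} (hx : PInt p x) : PMem p 1 (x ^ p - x) := by
  obtain ⟨a, b, hb, e⟩ := hx
  haveI : Fact p.Prime := ⟨hp⟩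
  have hbp : ¬ (p : ℤ) ∣ b ^ p := fun h => hb ((int_prime hp).dvd_of_dvd_pow h)
  have key : (p : ℤ) ∣ a ^ p - a * b ^ (p - 1) := by
    have hz : ((a ^ p - a * b ^ (p - 1) : ℤ) : ZMod p) = 0 := by
      push_cast
      rw [ZMod.pow_card, ZMod.pow_card_sub_one_eq_one (a := (b : ZMod p)) ?_]
      · ring
      · intro h
        exact hb ((ZMod.intCast_zmod_eq_zero_iff_dvd b p).mp h)
    exact (ZMod.intCast_zmod_eq_zero_iff_dvd _ p).mp hz
  obtain ⟨c, hc⟩ := key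
  refine ⟨c, b ^ p, hbp, ?_⟩
  have hb0 : (b : ℚ) ≠ 0 := b_ne_zero' hb
  have hx' : x = (a : ℚ) / b := by rw [eq_div_iff hb0]; linear_combination e
  have hcast : ((a:ℚ) ^ p - (a:ℚ) * (b:ℚ) ^ (p - 1)) = (p:ℚ) * c := by
    have := congrArg (fun z : ℤ => (z : ℚ)) hc
    push_cast at this
    linear_combination this
  have hbp1 : (b : ℚ) ^ p = (b:ℚ) ^ (p-1) * b := by
    have h2 := hp.two_le
    rw [← pow_succ]
    congr 1
    omega
  push_cast
  have e2 : ((b:ℚ))^p * x^p = (a:ℚ)^p := by rw [← mul_pow, e]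
  have e3 : ((b:ℚ))^p * x = (b:ℚ)^(p-1) * (a:ℚ) := by
    rw [hbp1]; linear_combination ((b:ℚ)^(p-1)) * e
  linear_combination e2 - e3 + hcast

lemma pint_inv_one_add (hp : p.Prime) {x : ℚ} (hx : PInt p x) :
    (1 + (p : ℚ) * x) ≠ 0 ∧ PInt p ((1 + (p : ℚ) * x)⁻¹) := by
  obtain ⟨a, b, hb, e⟩ := hx
  have hb0 : (b : ℚ) ≠ 0 := b_ne_zero' hb
  have hbpa : ¬ (p : ℤ) ∣ (b + p * a) := by
    intro h
    have h2 : (p:ℤ) ∣ (p * a) := ⟨a, rfl⟩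
    exact hb (by simpa using dvd_sub h h2)
  have hba0 : ((b + p * a : ℤ) : ℚ) ≠ 0 := b_ne_zero' hbpa
  have hz : (1 + (p:ℚ) * x) = ((b + p * a : ℤ) : ℚ) / b := by
    rw [eq_div_iff hb0]; push_cast; linear_combination (p:ℚ) * e
  constructor
  · rw [hz]; exact div_ne_zero hba0 hb0
  · refine ⟨b, b + p * a, hbpa, ?_⟩
    rw [hz, inv_div]
    push_cast at hba0 ⊢
    rw [mul_comm, div_mul_cancel₀ _ hba0]

end Arith

section SeriesBasic
variable {p : ℕ}

lemma coeff_theta (n : ℕ) (f : ℚ⟦X⟧) : coeff (R := ℚ) n (theta f) = n * coeff (R := ℚ) n f := coeff_mk n _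

lemma coeff_substPow (n : ℕ) (f : ℚ⟦X⟧) :
    coeff (R := ℚ) n (substPow p f) = if p ∣ n then coeff (R := ℚ) (n / p) f else 0 := coeff_mk n _

lemma theta_add (f g : ℚ⟦X⟧) : theta (f + g) = theta f + theta g := by
  ext n; simp [theta, coeff_mk, mul_add]

lemma theta_sub (f g : ℚ⟦X⟧) : theta (f - g) = theta f - theta g := by
  ext n; simp [theta, coeff_mk, mul_sub]

lemma theta_C (c : ℚ) : theta (C (R := ℚ) c) = 0 := by
  ext n; simp [theta, coeff_mk, coeff_C]
  intro h; simp [h]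

lemma theta_one : theta (1 : ℚ⟦X⟧) = 0 := by
  have : (1 : ℚ⟦X⟧) = C (R := ℚ) 1 := by simp
  rw [this, theta_C]

lemma theta_C_mul (c : ℚ) (f : ℚ⟦X⟧) : theta (C (R := ℚ) c * f) = C (R := ℚ) c * theta f := by
  ext n; simp [theta, coeff_mk, coeff_C_mul]; ring

lemma theta_X : theta (X : ℚ⟦X⟧) = X := by
  ext n
  simp only [theta, coeff_mk, coeff_X]
  by_cases h : n = 1 <;> simp [h]

lemma theta_mul (f g : ℚ⟦X⟧) : theta (f * g) = theta f * g + f * theta g := by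
  ext n
  simp only [theta, coeff_mk, coeff_mul, map_add, Finset.mul_sum, coeff_mk]
  rw [← Finset.sum_add_distrib]
  apply Finset.sum_congr rfl
  intro ij hij
  rw [Finset.HasAntidiagonal.mem_antidiagonal] at hij
  have hn : (n : ℚ) = (ij.1 : ℚ) + (ij.2 : ℚ) := by exact_mod_cast congrArg (Nat.cast (R := ℚ)) hij.symm
  rw [hn]; ring

lemma theta_pow (f : ℚ⟦X⟧) (n : ℕ) :
    theta (f ^ (n + 1)) = C (R := ℚ) (n + 1 : ℕ) * f ^ n * theta f := by
  induction n with
  | zero => simp [theta_mul, pow_succ, pow_zero]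
  | succ n ih =>
      rw [pow_succ, theta_mul, ih]
      have h2 : ((n + 1 + 1 : ℕ) : ℚ) = ((n + 1 : ℕ) : ℚ) + 1 := by push_cast; ring
      rw [h2, map_add, map_one]
      ring

lemma sum_mult (hp : 0 < p) (m : ℕ) (G : ℕ → ℚ) :
    ∑ n ∈ range (m + 1), (if p ∣ n then G n else 0) = ∑ k ∈ range (m / p + 1), G (p * k) := by
  rw [show (∑ n ∈ range (m + 1), if p ∣ n then G n else 0)
      = ∑ n ∈ (range (m + 1)).filter (p ∣ ·), G n from (Finset.sum_filter _ _).symm]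
  refine Finset.sum_nbij' (fun n => n / p) (fun k => p * k) ?_ ?_ ?_ ?_ ?_
  · intro a ha
    simp only [Finset.mem_filter, Finset.mem_range] at ha
    simp only [Finset.mem_range]
    have := Nat.div_le_div_right (c := p) (show a ≤ m by omega)
    omega
  · intro k hk
    simp only [Finset.mem_range] at hk
    simp only [Finset.mem_filter, Finset.mem_range]
    refine ⟨?_, ⟨k, rfl⟩⟩
    have h1 : p * k ≤ p * (m / p) := Nat.mul_le_mul_left p (by omega)
    have h2 : p * (m / p) ≤ m := by rw [mul_comm]; exact Nat.div_mul_le_self m p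
    omega
  · intro a ha
    simp only [Finset.mem_filter] at ha
    exact Nat.mul_div_cancel' ha.2
  · intro k hk
    exact Nat.mul_div_cancel_left k hp
  · intro a ha
    simp only [Finset.mem_filter] at ha
    rw [Nat.mul_div_cancel' ha.2]

lemma substPow_add (f g : ℚ⟦X⟧) : substPow p (f + g) = substPow p f + substPow p g := by
  ext n
  simp only [coeff_substPow, map_add]
  split <;> simp

lemma substPow_sub (f g : ℚ⟦X⟧) : substPow p (f - g) = substPow p f - substPow p g := by
  ext n
  simp only [coeff_substPow, map_sub]
  split <;> simp

lemma substPow_C (hp : 0 < p) (c : ℚ) : substPow p (C (R := ℚ) c) = C (R := ℚ) c := by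
  ext n
  rw [coeff_substPow]
  simp only [coeff_C]
  by_cases h : n = 0
  · subst h; simp
  · rw [if_neg h]
    split
    · rename_i hd
      have hnp : n / p ≠ 0 := by
        have h1 := Nat.le_of_dvd (Nat.pos_of_ne_zero h) hd
        have h2 := Nat.div_pos h1 hp
        omega
      rw [if_neg hnp]
    · rfl

lemma substPow_one (hp : 0 < p) : substPow p (1 : ℚ⟦X⟧) = 1 := by
  have h1 : (1 : ℚ⟦X⟧) = C (R := ℚ) 1 := by simp
  rw [h1, substPow_C hp]

lemma substPow_mul (hp : 0 < p) (f g : ℚ⟦X⟧) :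
    substPow p (f * g) = substPow p f * substPow p g := by
  ext n
  rw [coeff_substPow]
  by_cases hn : p ∣ n
  · obtain ⟨m, rfl⟩ := hn
    rw [if_pos ⟨m, rfl⟩, Nat.mul_div_cancel_left m hp, coeff_mul, coeff_mul,
      Finset.Nat.sum_antidiagonal_eq_sum_range_succ_mk,
      Finset.Nat.sum_antidiagonal_eq_sum_range_succ_mk]
    have step : ∀ i ∈ range (p * m + 1),
        coeff (R := ℚ) i (substPow p f) * coeff (R := ℚ) (p * m - i) (substPow p g)
        = if p ∣ i then coeff (R := ℚ) (i / p) f * coeff (R := ℚ) ((p * m - i) / p) g else 0 := by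
      intro i hi
      simp only [Finset.mem_range] at hi
      rw [coeff_substPow, coeff_substPow]
      by_cases hd : p ∣ i
      · have hd2 : p ∣ p * m - i := Nat.dvd_sub ⟨m, rfl⟩ hd
        simp [hd, hd2]
      · simp [hd]
    rw [Finset.sum_congr rfl step, sum_mult hp, Nat.mul_div_cancel_left m hp]
    apply Finset.sum_congr rfl
    intro k hk
    have h1 : p * k / p = k := Nat.mul_div_cancel_left k hp
    have h2 : (p * m - p * k) / p = m - k := by
      rw [← Nat.mul_sub, Nat.mul_div_cancel_left _ hp]
    rw [h1, h2]
  · rw [if_neg hn, coeff_mul]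
    symm
    apply Finset.sum_eq_zero
    intro ij hij
    rw [Finset.HasAntidiagonal.mem_antidiagonal] at hij
    rw [coeff_substPow, coeff_substPow]
    by_cases h1 : p ∣ ij.1
    · by_cases h2 : p ∣ ij.2
      · exact absurd (hij ▸ Nat.dvd_add h1 h2) hn
      · simp [h2]
    · simp [h1]

lemma substPow_pow (hp : 0 < p) (f : ℚ⟦X⟧) (n : ℕ) :
    substPow p (f ^ n) = (substPow p f) ^ n := by
  induction n with
  | zero => simpa using substPow_one hp
  | succ n ih => rw [pow_succ, substPow_mul hp, ih, pow_succ]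

lemma theta_substPow (hp : 0 < p) (f : ℚ⟦X⟧) :
    theta (substPow p f) = C (R := ℚ) (p : ℚ) * substPow p (theta f) := by
  ext n
  rw [coeff_theta, coeff_C_mul, coeff_substPow, coeff_substPow]
  by_cases hd : p ∣ n
  · rw [if_pos hd, if_pos hd, coeff_theta]
    obtain ⟨m, rfl⟩ := hd
    rw [Nat.mul_div_cancel_left m hp]
    push_cast
    ring
  · simp [hd]

noncomputable def shift (f : ℚ⟦X⟧) : ℚ⟦X⟧ := PowerSeries.mk fun n => coeff (R := ℚ) (n + 1) f

lemma X_mul_shift {f : ℚ⟦X⟧} (h0 : constantCoeff (R := ℚ) f = 0) : X * shift f = f := by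
  ext n
  cases n with
  | zero => simp [coeff_zero_eq_constantCoeff, h0]
  | succ n => rw [coeff_succ_X_mul]; simp [shift, coeff_mk]

lemma substPow_X_mul (hp : 0 < p) (f : ℚ⟦X⟧) :
    substPow p (X * f) = X ^ p * substPow p f := by
  ext n
  rw [coeff_substPow]
  by_cases hn : p ≤ n
  · obtain ⟨d, rfl⟩ : ∃ d, n = d + p := ⟨n - p, by omega⟩
    rw [coeff_X_pow_mul, coeff_substPow]
    by_cases hd : p ∣ d
    · have hdp : p ∣ d + p := Nat.dvd_add hd dvd_rfl
      rw [if_pos hdp, if_pos hd]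
      have h1 : (d + p) / p = d / p + 1 := by
        rw [Nat.add_div_right d hp]
      rw [h1, coeff_succ_X_mul]
    · have hdp : ¬ p ∣ d + p := fun h => hd (by simpa using Nat.dvd_sub h dvd_rfl)
      rw [if_neg hdp, if_neg hd]
  · have h2 : coeff (R := ℚ) n ((X : ℚ⟦X⟧) ^ p * substPow p f) = 0 := by
      have : X ^ p ∣ (X : ℚ⟦X⟧) ^ p * substPow p f := Dvd.intro _ rfl
      exact (X_pow_dvd_iff.mp this) n (by omega)
    rw [h2]
    by_cases hd : p ∣ n
    · have : n = 0 := by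
        rcases hd with ⟨c, rfl⟩
        rcases Nat.eq_zero_or_pos c with h | h
        · simp [h]
        · exfalso; apply hn; calc p = p * 1 := by ring
            _ ≤ p * c := Nat.mul_le_mul_left p h
      subst this
      rw [if_pos hd, Nat.zero_div]
      simp [coeff_zero_eq_constantCoeff]
    · rw [if_neg hd]

lemma coeff_pow_eq_zero {f : ℚ⟦X⟧} (h0 : constantCoeff (R := ℚ) f = 0) {j m : ℕ} (hm : m < j) :
    coeff (R := ℚ) m (f ^ j) = 0 := by
  have hX : (X : ℚ⟦X⟧) ∣ f := X_dvd_iff.mpr h0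
  have : (X : ℚ⟦X⟧) ^ j ∣ f ^ j := pow_dvd_pow_of_dvd hX j
  exact (X_pow_dvd_iff.mp this) m hm

/-- Sum of a family of series `F j` where `F j` has order `≥ j`. -/
noncomputable def sser (F : ℕ → ℚ⟦X⟧) : ℚ⟦X⟧ :=
  PowerSeries.mk fun m => ∑ j ∈ range (m + 1), coeff (R := ℚ) m (F j)

def OrdGe (F : ℕ → ℚ⟦X⟧) : Prop := ∀ j m, m < j → coeff (R := ℚ) m (F j) = 0

lemma coeff_sser (F : ℕ → ℚ⟦X⟧) (m : ℕ) :
    coeff (R := ℚ) m (sser F) = ∑ j ∈ range (m + 1), coeff (R := ℚ) m (F j) := coeff_mk m _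

lemma sser_congr {F G : ℕ → ℚ⟦X⟧} (h : ∀ j, F j = G j) : sser F = sser G := by
  ext m; rw [coeff_sser, coeff_sser]; exact Finset.sum_congr rfl fun j _ => by rw [h j]

lemma sser_add (F G : ℕ → ℚ⟦X⟧) : sser F + sser G = sser (fun j => F j + G j) := by
  ext m; simp [coeff_sser, Finset.sum_add_distrib]

lemma sser_sub (F G : ℕ → ℚ⟦X⟧) : sser F - sser G = sser (fun j => F j - G j) := by
  ext m; simp [coeff_sser, Finset.sum_sub_distrib]

lemma theta_sser (F : ℕ → ℚ⟦X⟧) : theta (sser F) = sser (fun j => theta (F j)) := by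
  ext m
  rw [coeff_theta, coeff_sser, coeff_sser, Finset.mul_sum]
  exact Finset.sum_congr rfl fun j _ => (coeff_theta m (F j)).symm

lemma ordGe_theta {F : ℕ → ℚ⟦X⟧} (hF : OrdGe F) : OrdGe (fun j => theta (F j)) := by
  intro j m hm
  rw [coeff_theta, hF j m hm, mul_zero]

lemma sser_mul {F : ℕ → ℚ⟦X⟧} (hF : OrdGe F) (g : ℚ⟦X⟧) :
    sser F * g = sser (fun j => F j * g) := by
  ext n
  rw [coeff_mul, coeff_sser]
  have step : ∀ ij ∈ antidiagonal n,
      coeff (R := ℚ) ij.1 (sser F) * coeff (R := ℚ) ij.2 g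
        = ∑ j ∈ range (n + 1), coeff (R := ℚ) ij.1 (F j) * coeff (R := ℚ) ij.2 g := by
    intro ij hij
    rw [Finset.HasAntidiagonal.mem_antidiagonal] at hij
    rw [coeff_sser, Finset.sum_mul]
    apply Finset.sum_subset
    · apply Finset.range_subset_range.mpr; omega
    · intro j hj hj2
      simp only [Finset.mem_range] at hj hj2
      rw [hF j ij.1 (by omega), zero_mul]
  rw [Finset.sum_congr rfl step, Finset.sum_comm]
  exact Finset.sum_congr rfl fun j _ => (coeff_mul n _ g).symm

lemma ordGe_mul {F : ℕ → ℚ⟦X⟧} (hF : OrdGe F) (g : ℚ⟦X⟧) : OrdGe (fun j => F j * g) := by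
  intro j m hm
  rw [coeff_mul]
  apply Finset.sum_eq_zero
  intro ij hij
  rw [Finset.HasAntidiagonal.mem_antidiagonal] at hij
  rw [hF j ij.1 (by omega), zero_mul]

lemma substPow_sser (hp : 0 < p) {F : ℕ → ℚ⟦X⟧} (hF : OrdGe F) :
    substPow p (sser F) = sser (fun j => substPow p (F j)) := by
  ext n
  have hR : coeff (R := ℚ) n (sser fun j => substPow p (F j))
      = ∑ j ∈ range (n + 1), (if p ∣ n then coeff (R := ℚ) (n / p) (F j) else 0) := by
    rw [coeff_sser]; exact Finset.sum_congr rfl fun j _ => by rw [coeff_substPow]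
  rw [hR, coeff_substPow]
  by_cases hd : p ∣ n
  · simp only [if_pos hd]
    rw [coeff_sser]
    apply Finset.sum_subset
    · exact Finset.range_subset_range.mpr (by have := Nat.div_le_self n p; omega)
    · intro j hj hj2
      simp only [Finset.mem_range] at hj hj2
      exact hF j (n / p) (by omega)
  · simp [hd]

lemma ordGe_substPow {F : ℕ → ℚ⟦X⟧} (hF : OrdGe F) : OrdGe (fun j => substPow p (F j)) := by
  intro j m hm
  rw [coeff_substPow]
  split
  · exact hF j _ (by have := Nat.div_le_self m p; omega)
  · rfl

lemma sser_telescope (A : ℕ → ℚ⟦X⟧) (hA : ∀ i m, m ≤ i → coeff (R := ℚ) m (A i) = 0) :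
    sser (fun j => if j = 0 then 0 else A (j - 1) - A j) = A 0 := by
  ext m
  rw [coeff_sser, Finset.sum_range_succ']
  simp only [if_pos rfl, map_zero, add_zero]
  have step : ∀ k, coeff (R := ℚ) m ((fun j => if j = 0 then (0 : ℚ⟦X⟧) else A (j - 1) - A j) (k + 1))
      = coeff (R := ℚ) m (A k) - coeff (R := ℚ) m (A (k + 1)) := by
    intro k
    simp only [Nat.succ_ne_zero, if_false, map_sub, Nat.add_sub_cancel]
  rw [Finset.sum_congr rfl fun k _ => step k, Finset.sum_range_sub']
  rw [hA m m le_rfl, sub_zero]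
  simp

lemma sint_sser (hp : p.Prime) {F : ℕ → ℚ⟦X⟧} (h : ∀ j n, PInt p (coeff (R := ℚ) n (F j))) (n : ℕ) :
    PInt p (coeff (R := ℚ) n (sser F)) := by
  rw [coeff_sser]
  exact pint_sum hp fun j _ => h j n

end SeriesBasic

def SInt (p : ℕ) (f : ℚ⟦X⟧) : Prop := ∀ n, PInt p (coeff (R := ℚ) n f)
def SMem (p r : ℕ) (f : ℚ⟦X⟧) : Prop := ∀ n, PMem p r (coeff (R := ℚ) n f)

section SMemBasic
variable {p : ℕ}

lemma sint_C (hp : p.Prime) {c : ℚ} (hc : PInt p c) : SInt p (C (R := ℚ) c) := by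
  intro n; rw [coeff_C]; split
  · exact hc
  · exact pint_zero hp

lemma sint_one (hp : p.Prime) : SInt p (1 : ℚ⟦X⟧) := by
  have : (1 : ℚ⟦X⟧) = C (R := ℚ) 1 := by simp
  rw [this]; exact sint_C hp (pint_one hp)

lemma sint_X (hp : p.Prime) : SInt p (X : ℚ⟦X⟧) := by
  intro n; rw [coeff_X]; split
  · exact pint_one hp
  · exact pint_zero hp

lemma sint_add (hp : p.Prime) {f g : ℚ⟦X⟧} (hf : SInt p f) (hg : SInt p g) : SInt p (f + g) :=
  fun n => by rw [map_add]; exact pint_add hp (hf n) (hg n)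

lemma sint_sub (hp : p.Prime) {f g : ℚ⟦X⟧} (hf : SInt p f) (hg : SInt p g) : SInt p (f - g) :=
  fun n => by rw [map_sub]; exact pint_sub hp (hf n) (hg n)

lemma sint_mul (hp : p.Prime) {f g : ℚ⟦X⟧} (hf : SInt p f) (hg : SInt p g) : SInt p (f * g) := by
  intro n
  rw [coeff_mul]
  exact pint_sum hp fun ij _ => pint_mul hp (hf ij.1) (hg ij.2)

lemma sint_pow (hp : p.Prime) {f : ℚ⟦X⟧} (hf : SInt p f) (n : ℕ) : SInt p (f ^ n) := by
  induction n with
  | zero => simpa using sint_one hp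
  | succ n ih => rw [pow_succ]; exact sint_mul hp ih hf

lemma sint_theta (hp : p.Prime) {f : ℚ⟦X⟧} (hf : SInt p f) : SInt p (theta f) := by
  intro n
  rw [coeff_theta]
  exact pint_mul hp (pint_natCast hp n) (hf n)

lemma sint_substPow (hp : p.Prime) {f : ℚ⟦X⟧} (hf : SInt p f) : SInt p (substPow p f) := by
  intro n
  rw [coeff_substPow]
  split
  · exact hf _
  · exact pint_zero hp

lemma sint_shift (hp : p.Prime) {f : ℚ⟦X⟧} (hf : SInt p f) : SInt p (shift f) := by
  intro n
  rw [show coeff (R := ℚ) n (shift f) = coeff (R := ℚ) (n + 1) f from coeff_mk n _]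
  exact hf (n + 1)

lemma sint_sum (hp : p.Prime) {α : Type*} {s : Finset α} {F : α → ℚ⟦X⟧}
    (h : ∀ i ∈ s, SInt p (F i)) : SInt p (∑ i ∈ s, F i) := by
  intro n
  rw [map_sum]
  exact pint_sum hp fun i hi => h i hi n

lemma smem_add (hp : p.Prime) {r : ℕ} {f g : ℚ⟦X⟧} (hf : SMem p r f) (hg : SMem p r g) :
    SMem p r (f + g) := fun n => by rw [map_add]; exact pmem_add hp (hf n) (hg n)

lemma smem_sub (hp : p.Prime) {r : ℕ} {f g : ℚ⟦X⟧} (hf : SMem p r f) (hg : SMem p r g) :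
    SMem p r (f - g) := fun n => by rw [map_sub]; exact pmem_sub hp (hf n) (hg n)

lemma smem_sum (hp : p.Prime) {r : ℕ} {α : Type*} {s : Finset α} {F : α → ℚ⟦X⟧}
    (h : ∀ i ∈ s, SMem p r (F i)) : SMem p r (∑ i ∈ s, F i) := by
  intro n
  rw [map_sum]
  exact pmem_sum hp fun i hi => h i hi n

lemma smem_mul (hp : p.Prime) {r s : ℕ} {f g : ℚ⟦X⟧} (hf : SMem p r f) (hg : SMem p s g) :
    SMem p (r + s) (f * g) := by
  intro n
  rw [coeff_mul]
  exact pmem_sum hp fun ij _ => pmem_mul hp (hf ij.1) (hg ij.2)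

lemma smem_of_sint {f : ℚ⟦X⟧} (hf : SInt p f) : SMem p 0 f :=
  fun n => pmem_zero_iff.mpr (hf n)

lemma sint_of_smem {r : ℕ} {f : ℚ⟦X⟧} (hf : SMem p r f) : SInt p f :=
  fun n => pint_of_pmem (hf n)

lemma smem_mul_sint (hp : p.Prime) {r : ℕ} {f g : ℚ⟦X⟧} (hf : SMem p r f) (hg : SInt p g) :
    SMem p r (f * g) := by
  have := smem_mul hp hf (smem_of_sint hg)
  simpa using this

lemma sint_mul_smem (hp : p.Prime) {r : ℕ} {f g : ℚ⟦X⟧} (hf : SInt p f) (hg : SMem p r g) :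
    SMem p r (f * g) := by
  rw [mul_comm]; exact smem_mul_sint hp hg hf

lemma smem_mono (hp : p.Prime) {r s : ℕ} (hrs : s ≤ r) {f : ℚ⟦X⟧} (hf : SMem p r f) :
    SMem p s f := fun n => pmem_mono hp hrs (hf n)

lemma smem_p_mul_sint (hp : p.Prime) {f : ℚ⟦X⟧} (hf : SInt p f) :
    SMem p 1 (C (R := ℚ) (p : ℚ) * f) := by
  intro n
  rw [coeff_C_mul]
  simpa using pmem_p_mul hp (pmem_zero_iff.mpr (hf n))

lemma smem_C_p (hp : p.Prime) : SMem p 1 (C (R := ℚ) (p : ℚ)) := by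
  simpa using smem_p_mul_sint hp (sint_one hp)

lemma natCast_eq_C (n : ℕ) : ((n : ℕ) : ℚ⟦X⟧) = C (R := ℚ) (n : ℚ) := (map_natCast (C (R := ℚ)) n).symm

lemma sint_natCast (hp : p.Prime) (n : ℕ) : SInt p ((n : ℕ) : ℚ⟦X⟧) := by
  rw [natCast_eq_C]; exact sint_C hp (pint_natCast hp n)

end SMemBasic

section Frobenius
variable {p : ℕ}

lemma decomposeC (f : ℚ⟦X⟧) : f = C (R := ℚ) (constantCoeff (R := ℚ) f) + X * shift f := by
  ext n
  cases n with
  | zero => simp [coeff_zero_eq_constantCoeff, shift]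
  | succ n =>
      rw [map_add, coeff_succ_X_mul, coeff_C]
      simp [shift, coeff_mk]

lemma substPow_decomp (hp : 0 < p) (f : ℚ⟦X⟧) :
    substPow p f = C (R := ℚ) (constantCoeff (R := ℚ) f) + X ^ p * substPow p (shift f) := by
  conv_lhs => rw [decomposeC f]
  rw [substPow_add, substPow_C hp, substPow_X_mul hp]

lemma frob (hp : p.Prime) : ∀ m : ℕ, ∀ f : ℚ⟦X⟧, SInt p f →
    PMem p 1 (coeff (R := ℚ) m (f ^ p - substPow p f)) := by
  intro m
  induction m using Nat.strong_induction_on with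
  | _ m ih =>
    intro f hf
    have hp0 : 0 < p := hp.pos
    have hp2 : 2 ≤ p := hp.two_le
    set a0 := constantCoeff (R := ℚ) f with ha0
    set g := shift f with hgdef
    have hg : SInt p g := sint_shift hp hf
    have ha0i : PInt p a0 := by
      rw [ha0, ← coeff_zero_eq_constantCoeff]; exact hf 0
    set M : ℚ⟦X⟧ := ∑ k ∈ Finset.Ico 1 p,
      (C (R := ℚ) a0) ^ k * (X * g) ^ (p - k) * ((Nat.choose p k : ℕ) : ℚ⟦X⟧) with hMdef
    have hM : f ^ p = (X * g) ^ p + M + (C (R := ℚ) a0) ^ p := by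
      conv_lhs => rw [decomposeC f, add_pow]
      rw [Finset.range_eq_Ico, Finset.sum_eq_sum_Ico_succ_bot (by omega : 0 < p + 1),
        Finset.sum_Ico_succ_top (by omega : 1 ≤ p)]
      simp only [pow_zero, one_mul, Nat.choose_zero_right, Nat.choose_self, Nat.sub_self,
        Nat.cast_one, mul_one, Nat.sub_zero]
      ring
    have hMmem : SMem p 1 M := by
      apply smem_sum hp
      intro k hk
      rw [Finset.mem_Ico] at hk
      obtain ⟨c, hc⟩ := hp.dvd_choose_self (by omega : k ≠ 0) (by omega : k < p)
      rw [hc, Nat.cast_mul, natCast_eq_C p, natCast_eq_C c]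
      have heq : (C (R := ℚ) a0) ^ k * (X * g) ^ (p - k) * (C (R := ℚ) (p : ℚ) * C (R := ℚ) (c : ℚ))
          = C (R := ℚ) (p : ℚ) * ((C (R := ℚ) a0) ^ k * (X * g) ^ (p - k) * C (R := ℚ) (c : ℚ)) := by ring
      rw [heq]
      exact smem_p_mul_sint hp
        (sint_mul hp (sint_mul hp (sint_pow hp (sint_C hp ha0i) k)
          (sint_pow hp (sint_mul hp (sint_X hp) hg) (p - k))) (sint_C hp (pint_natCast hp c)))
    have hsub : substPow p f = C (R := ℚ) a0 + X ^ p * substPow p g := substPow_decomp hp0 f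
    have key : f ^ p - substPow p f
        = (C (R := ℚ) (a0 ^ p) - C (R := ℚ) a0) + (X ^ p * (g ^ p - substPow p g)) + M := by
      rw [hM, hsub, mul_pow, map_pow]
      ring
    rw [key, map_add, map_add]
    refine pmem_add hp (pmem_add hp ?_ ?_) (hMmem m)
    · rw [← map_sub, coeff_C]
      split
      · exact fermat_rat hp ha0i
      · exact pmem_zero hp 1
    · by_cases hmp : p ≤ m
      · obtain ⟨d, rfl⟩ : ∃ d, m = d + p := ⟨m - p, by omega⟩
        rw [coeff_X_pow_mul]
        exact ih d (by omega) g hg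
      · have hz : coeff (R := ℚ) m ((X : ℚ⟦X⟧) ^ p * (g ^ p - substPow p g)) = 0 :=
          (X_pow_dvd_iff.mp (Dvd.intro _ rfl)) m (by omega)
        rw [hz]
        exact pmem_zero hp 1

lemma frob' (hp : p.Prime) {f : ℚ⟦X⟧} (hf : SInt p f) : SMem p 1 (f ^ p - substPow p f) :=
  fun m => frob hp m f hf

lemma smem_pow_p (hp : p.Prime) {s : ℕ} (hs : 1 ≤ s) {f g : ℚ⟦X⟧} (hf : SInt p f) (hg : SInt p g)
    (h : SMem p s (f - g)) : SMem p (s + 1) (f ^ p - g ^ p) := by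
  have hp2 := hp.two_le
  set d := f - g with hd
  have hfd : f = d + g := by rw [hd]; ring
  have expand2 : f ^ p - g ^ p
      = ∑ k ∈ Finset.Ico 1 (p + 1), d ^ k * g ^ (p - k) * ((Nat.choose p k : ℕ) : ℚ⟦X⟧) := by
    conv_lhs => rw [hfd, add_pow]
    rw [Finset.range_eq_Ico, Finset.sum_eq_sum_Ico_succ_bot (by omega : 0 < p + 1)]
    simp only [pow_zero, one_mul, Nat.choose_zero_right, Nat.cast_one, mul_one, Nat.sub_zero]
    ring
  rw [expand2]
  apply smem_sum hp
  intro k hk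
  rw [Finset.mem_Ico] at hk
  have hdint : SInt p d := sint_sub hp hf hg
  rcases eq_or_lt_of_le hk.1 with h1 | h1
  · rw [← h1, pow_one, Nat.choose_one_right, natCast_eq_C p]
    have heq : d * g ^ (p - 1) * C (R := ℚ) (p : ℚ) = C (R := ℚ) (p : ℚ) * (d * g ^ (p - 1)) := by ring
    rw [heq]
    have h3 := smem_mul hp (smem_C_p hp) (smem_mul_sint hp h (sint_pow hp hg (p - 1)))
    rwa [add_comm 1 s] at h3
  · -- 2 ≤ k
    have e1 : d ^ k = d * d * d ^ (k - 2) := by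
      rw [← pow_two, ← pow_add]
      congr 1
      omega
    rw [e1]
    have h2 : SMem p (s + s) (d * d) := smem_mul hp h h
    have heq : d * d * d ^ (k - 2) * g ^ (p - k) * ((Nat.choose p k : ℕ) : ℚ⟦X⟧)
        = (d * d) * (d ^ (k - 2) * g ^ (p - k) * ((Nat.choose p k : ℕ) : ℚ⟦X⟧)) := by ring
    rw [heq]
    refine smem_mono hp (by omega) (smem_mul_sint hp h2 ?_)
    exact sint_mul hp (sint_mul hp (sint_pow hp hdint _) (sint_pow hp hg _)) (sint_natCast hp _)

lemma smem_pow_ppow (hp : p.Prime) {f g : ℚ⟦X⟧} (hf : SInt p f) (hg : SInt p g)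
    (h : SMem p 1 (f - g)) (r : ℕ) : SMem p (r + 1) (f ^ (p ^ r) - g ^ (p ^ r)) := by
  induction r with
  | zero => simpa using h
  | succ r ih =>
      have e1 : f ^ (p ^ (r + 1)) = (f ^ (p ^ r)) ^ p := by rw [← pow_mul, pow_succ]
      have e2 : g ^ (p ^ (r + 1)) = (g ^ (p ^ r)) ^ p := by rw [← pow_mul, pow_succ]
      rw [e1, e2]
      exact smem_pow_p hp (by omega) (sint_pow hp hf _) (sint_pow hp hg _) ih

lemma smem_pow_all (hp : p.Prime) {f g : ℚ⟦X⟧} (hf : SInt p f) (hg : SInt p g)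
    (h : SMem p 1 (f - g)) (n : ℕ) (hn : n ≠ 0) :
    SMem p (n.factorization p + 1) (f ^ n - g ^ n) := by
  set r := n.factorization p with hr
  set ℓ := n / p ^ r with hl
  have hnl : p ^ r * ℓ = n := Nat.ordProj_mul_ordCompl_eq_self n p
  have e1 : f ^ n = (f ^ (p ^ r)) ^ ℓ := by rw [← pow_mul, hnl]
  have e2 : g ^ n = (g ^ (p ^ r)) ^ ℓ := by rw [← pow_mul, hnl]
  rw [e1, e2, ← geom_sum₂_mul]
  exact sint_mul_smem hp
    (sint_sum hp fun i _ => sint_mul hp (sint_pow hp (sint_pow hp hf _) _)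
      (sint_pow hp (sint_pow hp hg _) _))
    (smem_pow_ppow hp hf hg h r)

end Frobenius

section Extra
variable {p : ℕ}

lemma theta_zero : theta (0 : ℚ⟦X⟧) = 0 := by
  ext n; simp [theta, coeff_mk]

lemma substPow_zero : substPow p (0 : ℚ⟦X⟧) = 0 := by
  ext n; rw [coeff_substPow]; simp

lemma ne_zero_of_cc {f : ℚ⟦X⟧} (h : constantCoeff (R := ℚ) f ≠ 0) : f ≠ 0 :=
  fun hf => h (by rw [hf, map_zero])

lemma C_ne_zero {c : ℚ} (h : c ≠ 0) : (C (R := ℚ) c) ≠ 0 :=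
  ne_zero_of_cc (by rwa [constantCoeff_C])

lemma sser_C_mul (c : ℚ) (F : ℕ → ℚ⟦X⟧) :
    C (R := ℚ) c * sser F = sser (fun j => C (R := ℚ) c * F j) := by
  ext m
  rw [coeff_C_mul, coeff_sser, coeff_sser, Finset.mul_sum]
  exact Finset.sum_congr rfl fun j _ => (coeff_C_mul m (F j) c).symm

lemma sint_div_p (hp : p.Prime) {f : ℚ⟦X⟧} (hf : SMem p 1 f) :
    SInt p (C (R := ℚ) (1 / (p : ℚ)) * f) := by
  intro n
  rw [coeff_C_mul]
  have h2 : 1 / (p : ℚ) * coeff (R := ℚ) n f = coeff (R := ℚ) n f / (p : ℕ) := by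
    push_cast; ring
  rw [h2]
  refine pmem_div_nat hp (hf n) (by have := hp.two_le; omega : p ≠ 0) ?_
  exact le_of_eq (Nat.Prime.factorization_self hp)

lemma sint_inv (hp : p.Prime) {v : ℚ⟦X⟧} (hv : SInt p v) {y : ℚ} (hy : PInt p y)
    (hy1 : constantCoeff (R := ℚ) v * y = 1) : SInt p (v⁻¹) := by
  have hv0 : constantCoeff (R := ℚ) v ≠ 0 := by
    intro h; rw [h, zero_mul] at hy1; exact absurd hy1 (by norm_num)
  have hinv : v⁻¹ * v = 1 := PowerSeries.inv_mul_cancel v hv0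
  have hy0 : coeff (R := ℚ) 0 v * y = 1 := by rw [coeff_zero_eq_constantCoeff]; exact hy1
  intro n
  induction n using Nat.strong_induction_on with
  | _ n ih =>
    have hc : ∑ ij ∈ antidiagonal n, coeff (R := ℚ) ij.1 v⁻¹ * coeff (R := ℚ) ij.2 v = coeff (R := ℚ) n 1 := by
      rw [← coeff_mul, hinv]
    rw [Finset.Nat.sum_antidiagonal_eq_sum_range_succ_mk, Finset.sum_range_succ] at hc
    have hrec : coeff (R := ℚ) n v⁻¹
        = (coeff (R := ℚ) n 1 - ∑ k ∈ range n, coeff (R := ℚ) k v⁻¹ * coeff (R := ℚ) (n - k) v) * y := by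
      calc coeff (R := ℚ) n v⁻¹ = coeff (R := ℚ) n v⁻¹ * (coeff (R := ℚ) 0 v * y) := by rw [hy0, mul_one]
        _ = (coeff (R := ℚ) n 1 - ∑ k ∈ range n, coeff (R := ℚ) k v⁻¹ * coeff (R := ℚ) (n - k) v) * y := by
            rw [← hc]; simp only [Nat.sub_self]; ring
    rw [hrec]
    refine pint_mul hp (pint_sub hp ?_ ?_) hy
    · rw [coeff_one]; split
      · exact pint_one hp
      · exact pint_zero hp
    · exact pint_sum hp fun k hk => pint_mul hp (ih k (Finset.mem_range.mp hk)) (hv _)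

end Extra

/-- key exactness step: if `(b_n) ⊆ ℤ_(p)` satisfies
`b_{ℓp^r} ≡ b_{ℓp^{r-1}} mod p^r` and `t ∈ ℤ_(p)[[u]]` has `t(0) = 0` and unit linear
coefficient, then `Ω(t(u)) − (1/p)Ω(t(u^p))` is an exact differential `dΨ` with
`Ψ ∈ ℤ_(p)[[u]]`, where `Ω(x) = Σ b_n x^{n-1} dx`.  The identity
`S₁·θt/t − (1/p)·S₂·θT/T = θΨ` (with `T = t∘u^p`, `S₁ = Σ b_n tⁿ`, `S₂ = Σ b_n Tⁿ`)
is stated multiplied through by `p·t·T`. -/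
theorem omega_exactness (p : ℕ) (hp : p.Prime) (b : ℕ → ℚ)
    (hb : ∀ n : ℕ, PInt p (b n))
    (hcong : ∀ ℓ r : ℕ, 1 ≤ ℓ → 1 ≤ r → PMem p r (b (ℓ * p ^ r) - b (ℓ * p ^ (r - 1))))
    (t : PowerSeries ℚ) (ht : ∀ n : ℕ, PInt p (coeff (R := ℚ) n t))
    (ht0 : constantCoeff (R := ℚ) t = 0)
    (ha1 : PInt p (coeff (R := ℚ) 1 t) ∧ ∃ y : ℚ, PInt p y ∧ coeff (R := ℚ) 1 t * y = 1) :
    ∃ Ψ : PowerSeries ℚ, (∀ n : ℕ, PInt p (coeff (R := ℚ) n Ψ)) ∧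
      (C (R := ℚ) p) * (PowerSeries.mk fun m => ∑ n ∈ range (m + 1), b n * coeff (R := ℚ) m (t ^ n)) *
          theta t * substPow p t -
        (PowerSeries.mk fun m => ∑ n ∈ range (m + 1), b n * coeff (R := ℚ) m ((substPow p t) ^ n)) *
          theta (substPow p t) * t =
      (C (R := ℚ) p) * theta Ψ * t * substPow p t := by
  classical
  obtain ⟨hc1, y, hy, hy1⟩ := ha1
  have hp0 : 0 < p := hp.pos
  have hp2 : 2 ≤ p := hp.two_le
  have hpne : p ≠ 0 := by omega
  have hpq : (p : ℚ) ≠ 0 := Nat.cast_ne_zero.mpr hpne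
  have hCp : (C (R := ℚ) (p : ℚ)) ≠ 0 := C_ne_zero hpq
  have htint : SInt p t := ht
  -- the unit part v of t, and its inverse
  set v : ℚ⟦X⟧ := shift t with hvdef
  have htv : X * v = t := X_mul_shift ht0
  have hv : SInt p v := sint_shift hp ht
  have hv0 : constantCoeff (R := ℚ) v = coeff (R := ℚ) 1 t := by
    rw [hvdef, ← coeff_zero_eq_constantCoeff]
    simp [shift, coeff_mk]
  have hv0y : constantCoeff (R := ℚ) v * y = 1 := by rw [hv0]; exact hy1
  have hv0ne : constantCoeff (R := ℚ) v ≠ 0 := by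
    intro h; rw [h, zero_mul] at hv0y; exact absurd hv0y (by norm_num)
  set vi : ℚ⟦X⟧ := v⁻¹ with hvidef
  have hviv : vi * v = 1 := PowerSeries.inv_mul_cancel v hv0ne
  have hvvi : v * vi = 1 := by rw [mul_comm]; exact hviv
  have hvi : SInt p vi := sint_inv hp hv hy hv0y
  set w := theta v * vi with hwdef
  have hwint : SInt p w := sint_mul hp (sint_theta hp hv) hvi
  have hwv : w * v = theta v := by
    rw [hwdef]
    calc theta v * vi * v = theta v * (vi * v) := by ring
      _ = theta v := by rw [hviv, mul_one]
  have hθt : theta t = t * (1 + w) := by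
    have h1 : theta t = t + X * theta v := by
      conv_lhs => rw [← htv]
      rw [theta_mul, theta_X, htv]
    have h2 : t * w = X * theta v := by
      rw [← htv]
      calc X * v * w = X * (w * v) := by ring
        _ = X * theta v := by rw [hwv]
    rw [mul_add, mul_one, h2, h1]
  set T := substPow p t with hTdef
  set W := substPow p w with hWdef
  set Vt := substPow p v with hVtdef
  set Vi := substPow p vi with hVidef
  have hWint : SInt p W := sint_substPow hp hwint
  have hTint : SInt p T := sint_substPow hp ht
  have hViVt : Vi * Vt = 1 := by
    rw [hVidef, hVtdef, ← substPow_mul hp0, hviv, substPow_one hp0]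
  have hVt0 : constantCoeff (R := ℚ) Vt = constantCoeff (R := ℚ) v := by
    rw [hVtdef, ← coeff_zero_eq_constantCoeff, coeff_substPow]
    simp [coeff_zero_eq_constantCoeff]
  have hVtne : Vt ≠ 0 := ne_zero_of_cc (by rw [hVt0]; exact hv0ne)
  have hθT : theta T = C (R := ℚ) (p : ℚ) * (T * (1 + W)) := by
    rw [hTdef, theta_substPow hp0, hθt, substPow_mul hp0, substPow_add, substPow_one hp0]
  have hsubθv : substPow p (theta v) = W * Vt := by
    rw [← hwv, substPow_mul hp0]
  have hθVt : theta Vt = C (R := ℚ) (p : ℚ) * (W * Vt) := by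
    rw [hVtdef, theta_substPow hp0, hsubθv]
  -- Frobenius data & the series k
  set d := v ^ p - Vt with hddef
  have hd : SMem p 1 d := by rw [hddef, hVtdef]; exact frob' hp hv
  set hh : ℚ⟦X⟧ := (C (R := ℚ) (1 / (p : ℚ)) * d) * Vi with hhdef
  have hhint : SInt p hh := sint_mul hp (sint_div_p hp hd) (sint_substPow hp hvi)
  set h0 := constantCoeff (R := ℚ) hh with hh0def
  have hh0int : PInt p h0 := by rw [hh0def, ← coeff_zero_eq_constantCoeff]; exact hhint 0
  obtain ⟨hzne, hzinv⟩ := pint_inv_one_add hp hh0int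
  set z : ℚ := 1 + (p : ℚ) * h0 with hzdef
  set ζ : ℚ := z⁻¹ with hζdef
  have hzζ : z * ζ = 1 := mul_inv_cancel₀ hzne
  set k := (hh - C (R := ℚ) h0) * C (R := ℚ) ζ with hkdef
  have hkint : SInt p k := sint_mul hp (sint_sub hp hhint (sint_C hp hh0int)) (sint_C hp hzinv)
  have hk0 : constantCoeff (R := ℚ) k = 0 := by
    rw [hkdef, map_mul, map_sub, constantCoeff_C]
    simp [hh0def]
  have hCz : C (R := ℚ) z * C (R := ℚ) ζ = 1 := by rw [← map_mul, hzζ, map_one]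
  have hE1 : C (R := ℚ) z * (1 + C (R := ℚ) (p : ℚ) * k) = 1 + C (R := ℚ) (p : ℚ) * hh := by
    have e1 : C (R := ℚ) z * k = hh - C (R := ℚ) h0 := by
      rw [hkdef]
      calc C (R := ℚ) z * ((hh - C (R := ℚ) h0) * C (R := ℚ) ζ) = (hh - C (R := ℚ) h0) * (C (R := ℚ) z * C (R := ℚ) ζ) := by ring
        _ = hh - C (R := ℚ) h0 := by rw [hCz, mul_one]
    have e2 : C (R := ℚ) z = 1 + C (R := ℚ) (p : ℚ) * C (R := ℚ) h0 := by
      rw [hzdef, map_add, map_one, map_mul]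
    calc C (R := ℚ) z * (1 + C (R := ℚ) (p : ℚ) * k) = C (R := ℚ) z + C (R := ℚ) (p : ℚ) * (C (R := ℚ) z * k) := by ring
      _ = C (R := ℚ) z + C (R := ℚ) (p : ℚ) * (hh - C (R := ℚ) h0) := by rw [e1]
      _ = 1 + C (R := ℚ) (p : ℚ) * hh := by rw [e2]; ring
  have hE2 : (1 + C (R := ℚ) (p : ℚ) * hh) * Vt = v ^ p := by
    have e3 : C (R := ℚ) (p : ℚ) * C (R := ℚ) (1 / (p : ℚ)) = 1 := by
      rw [← map_mul, mul_one_div, div_self hpq, map_one]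
    calc (1 + C (R := ℚ) (p : ℚ) * hh) * Vt
        = Vt + (C (R := ℚ) (p : ℚ) * C (R := ℚ) (1 / (p : ℚ))) * (d * (Vi * Vt)) := by rw [hhdef]; ring
      _ = Vt + d := by rw [e3, hViVt]; ring
      _ = v ^ p := by rw [hddef]; ring
  have hE : C (R := ℚ) z * (1 + C (R := ℚ) (p : ℚ) * k) * Vt = v ^ p := by rw [hE1, hE2]
  have hθvp : theta (v ^ p) = C (R := ℚ) (p : ℚ) * (v ^ p * w) := by
    have hpp : p = (p - 1) + 1 := by omega
    conv_lhs => rw [hpp]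
    rw [theta_pow v (p - 1), ← hwv]
    have e4 : ((p - 1 + 1 : ℕ) : ℚ) = (p : ℚ) := by rw [← hpp]
    rw [e4]
    calc C (R := ℚ) (p : ℚ) * v ^ (p - 1) * (w * v) = C (R := ℚ) (p : ℚ) * (v ^ (p - 1) * v * w) := by ring
      _ = C (R := ℚ) (p : ℚ) * (v ^ (p - 1 + 1) * w) := by rw [pow_succ]
      _ = C (R := ℚ) (p : ℚ) * (v ^ p * w) := by rw [← hpp]
  have hθE : C (R := ℚ) z * (C (R := ℚ) (p : ℚ) * theta k * Vt
        + (1 + C (R := ℚ) (p : ℚ) * k) * (C (R := ℚ) (p : ℚ) * (W * Vt)))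
      = C (R := ℚ) (p : ℚ) * (v ^ p * w) := by
    have t3 : theta (1 + C (R := ℚ) (p : ℚ) * k) = C (R := ℚ) (p : ℚ) * theta k := by
      rw [theta_add, theta_one, theta_C_mul, zero_add]
    have h5 := congrArg theta hE
    rw [mul_assoc] at h5
    rw [theta_C_mul, theta_mul, t3, hθVt, hθvp] at h5
    linear_combination h5
  have hθE' : C (R := ℚ) z * (theta k * Vt + (1 + C (R := ℚ) (p : ℚ) * k) * (W * Vt)) = v ^ p * w := by
    have h6 : C (R := ℚ) (p : ℚ) * (C (R := ℚ) z * (theta k * Vt + (1 + C (R := ℚ) (p : ℚ) * k) * (W * Vt)))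
        = C (R := ℚ) (p : ℚ) * (v ^ p * w) := by linear_combination hθE
    exact mul_left_cancel₀ hCp h6
  have hCzne : (C (R := ℚ) z) ≠ 0 := C_ne_zero hzne
  have hkey : theta k = (1 + C (R := ℚ) (p : ℚ) * k) * (w - W) := by
    have h7 : (C (R := ℚ) z * Vt) * (theta k + (1 + C (R := ℚ) (p : ℚ) * k) * W)
        = (C (R := ℚ) z * Vt) * ((1 + C (R := ℚ) (p : ℚ) * k) * w) := by
      linear_combination hθE' - w * hE
    have h8 := mul_left_cancel₀ (mul_ne_zero hCzne hVtne) h7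
    linear_combination h8
  -- Ψ0 : the logarithm part
  set A : ℕ → ℚ⟦X⟧ := fun i => C (R := ℚ) ((-1 : ℚ) ^ i) * C (R := ℚ) ((p : ℚ) ^ i) * (k ^ i * theta k)
    with hAdef
  set P0 : ℕ → ℚ⟦X⟧ := fun j =>
    if j = 0 then 0 else C (R := ℚ) ((-1 : ℚ) ^ (j + 1) * (p : ℚ) ^ (j - 1) / j) * k ^ j with hP0def
  have hP0ord : OrdGe P0 := by
    intro j m hm
    rw [hP0def]
    simp only []
    split
    · simp
    · rw [coeff_C_mul, coeff_pow_eq_zero hk0 hm, mul_zero]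
  set Ψ0 := sser P0 with hΨ0def
  have hΨ0int : SInt p Ψ0 := by
    apply sint_sser hp
    intro j n
    rw [hP0def]
    simp only []
    split
    · simpa using pint_zero hp
    · rename_i hj
      rw [coeff_C_mul]
      refine pint_mul hp ?_ (sint_pow hp hkint j n)
      have e5 : (-1 : ℚ) ^ (j + 1) * (p : ℚ) ^ (j - 1) / (j : ℚ)
          = (-1 : ℚ) ^ (j + 1) * ((p : ℚ) ^ (j - 1) / (j : ℚ)) := by ring
      rw [e5]
      refine pint_mul hp ?_ (pint_pow_div hp j (by omega))
      have e6 : ((-1 : ℚ)) ^ (j + 1) = (((-1 : ℤ) ^ (j + 1) : ℤ) : ℚ) := by push_cast; ring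
      rw [e6]
      exact pint_intCast hp _
  have hAord : ∀ i m, m ≤ i → coeff (R := ℚ) m (A i) = 0 := by
    intro i m hm
    rw [hAdef]
    simp only []
    rw [mul_assoc, coeff_C_mul, coeff_C_mul, coeff_mul]
    rw [Finset.sum_eq_zero, mul_zero, mul_zero]
    intro ij hij
    rw [Finset.HasAntidiagonal.mem_antidiagonal] at hij
    by_cases hij1 : ij.1 < i
    · rw [coeff_pow_eq_zero hk0 hij1, zero_mul]
    · have h9 : ij.2 = 0 := by omega
      rw [h9, coeff_theta]
      simp
  have hθΨ0k : theta Ψ0 * (1 + C (R := ℚ) (p : ℚ) * k) = theta k := by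
    rw [hΨ0def, theta_sser, sser_mul (ordGe_theta hP0ord)]
    have hsw : ∀ j, theta (P0 j) * (1 + C (R := ℚ) (p : ℚ) * k)
        = (fun j => if j = 0 then 0 else A (j - 1) - A j) j := by
      intro j
      cases j with
      | zero => rw [hP0def]; simp [theta_zero]
      | succ i =>
          rw [hP0def, hAdef]
          simp only [Nat.succ_ne_zero, if_false, Nat.add_sub_cancel]
          rw [theta_C_mul, theta_pow k i]
          have hne : ((i + 1 : ℕ) : ℚ) ≠ 0 := Nat.cast_ne_zero.mpr (by omega)
          have hc : C (R := ℚ) ((-1 : ℚ) ^ (i + 1 + 1) * (p : ℚ) ^ (i + 1 - 1) / ((i + 1 : ℕ) : ℚ))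
                * C (R := ℚ) (((i + 1 : ℕ)) : ℚ)
              = C (R := ℚ) ((-1 : ℚ) ^ i) * C (R := ℚ) ((p : ℚ) ^ i) := by
            rw [← map_mul, ← map_mul]
            congr 1
            have e7 : ((-1 : ℚ)) ^ (i + 1 + 1) = (-1 : ℚ) ^ i := by
              rw [show ((-1 : ℚ)) ^ (i + 1 + 1) = (-1 : ℚ) ^ i * (-1 : ℚ) ^ 2 from by
                rw [← pow_add]]
              norm_num
            rw [e7, Nat.add_sub_cancel, div_mul_cancel₀ _ hne]
          have e8 : C (R := ℚ) ((-1 : ℚ) ^ (i + 1)) = - C (R := ℚ) ((-1 : ℚ) ^ i) := by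
            have cneg : C (R := ℚ) (-1 : ℚ) = -1 := by rw [map_neg, map_one]
            rw [pow_succ, map_mul, cneg]
            ring
          have e9 : C (R := ℚ) ((p : ℚ) ^ (i + 1)) = C (R := ℚ) ((p : ℚ) ^ i) * C (R := ℚ) (p : ℚ) := by
            rw [pow_succ, map_mul]
          calc C (R := ℚ) ((-1 : ℚ) ^ (i + 1 + 1) * (p : ℚ) ^ (i + 1 - 1) / ((i + 1 : ℕ) : ℚ))
                * (C (R := ℚ) (((i + 1 : ℕ)) : ℚ) * k ^ i * theta k) * (1 + C (R := ℚ) (p : ℚ) * k)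
              = (C (R := ℚ) ((-1 : ℚ) ^ (i + 1 + 1) * (p : ℚ) ^ (i + 1 - 1) / ((i + 1 : ℕ) : ℚ))
                * C (R := ℚ) (((i + 1 : ℕ)) : ℚ)) * (k ^ i * theta k) * (1 + C (R := ℚ) (p : ℚ) * k) := by
                ring
            _ = C (R := ℚ) ((-1 : ℚ) ^ i) * C (R := ℚ) ((p : ℚ) ^ i) * (k ^ i * theta k)
                * (1 + C (R := ℚ) (p : ℚ) * k) := by rw [hc]
            _ = C (R := ℚ) ((-1 : ℚ) ^ i) * C (R := ℚ) ((p : ℚ) ^ i) * (k ^ i * theta k)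
                - C (R := ℚ) ((-1 : ℚ) ^ (i + 1)) * C (R := ℚ) ((p : ℚ) ^ (i + 1)) * (k ^ (i + 1) * theta k)
                := by rw [e8, e9, pow_succ]; ring
    rw [sser_congr hsw, sser_telescope A hAord, hAdef]
    simp
  have h1pkne : (1 + C (R := ℚ) (p : ℚ) * k) ≠ 0 := by
    apply ne_zero_of_cc
    rw [map_add, map_one, map_mul, constantCoeff_C, hk0]
    norm_num
  have hΨ0w : theta Ψ0 = w - W := by
    apply mul_right_cancel₀ h1pkne
    rw [hθΨ0k, hkey]
    ring
  -- the series S1, S2 and g1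
  set F1 : ℕ → ℚ⟦X⟧ := fun n => C (R := ℚ) (b n) * t ^ n with hF1def
  have hF1ord : OrdGe F1 := by
    intro n m hm
    rw [hF1def]
    simp only []
    rw [coeff_C_mul, coeff_pow_eq_zero ht0 hm, mul_zero]
  set S1 := sser F1 with hS1def
  have hS1mk : (PowerSeries.mk fun m => ∑ n ∈ range (m + 1), b n * coeff (R := ℚ) m (t ^ n)) = S1 := by
    ext m
    rw [coeff_mk, hS1def, coeff_sser]
    refine Finset.sum_congr rfl fun n _ => ?_
    rw [hF1def]
    simp only []
    rw [coeff_C_mul]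
  set S2 := substPow p S1 with hS2def
  have hS2sser : S2 = sser (fun n => C (R := ℚ) (b n) * T ^ n) := by
    rw [hS2def, hS1def, substPow_sser hp0 hF1ord]
    apply sser_congr
    intro n
    rw [hF1def]
    simp only []
    rw [substPow_mul hp0, substPow_C hp0, substPow_pow hp0, hTdef]
  have hS2mk : (PowerSeries.mk fun m => ∑ n ∈ range (m + 1), b n * coeff (R := ℚ) m (T ^ n)) = S2 := by
    rw [hS2sser]
    ext m
    rw [coeff_mk, coeff_sser]
    refine Finset.sum_congr rfl fun n _ => ?_
    rw [coeff_C_mul]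
  set G1 : ℕ → ℚ⟦X⟧ := fun n => if n = 0 then 0 else C (R := ℚ) (b n / n) * t ^ n with hG1def
  have hG1ord : OrdGe G1 := by
    intro n m hm
    rw [hG1def]
    simp only []
    split
    · simp
    · rw [coeff_C_mul, coeff_pow_eq_zero ht0 hm, mul_zero]
  set g1 := sser G1 with hg1def
  set F1' : ℕ → ℚ⟦X⟧ := fun n => if n = 0 then 0 else F1 n with hF1'def
  have hF1'ord : OrdGe F1' := by
    intro n m hm
    rw [hF1'def]
    simp only []
    split
    · simp
    · exact hF1ord n m hm
  have hsub1 : S1 - C (R := ℚ) (b 0) = sser F1' := by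
    ext m
    rw [map_sub, hS1def, coeff_sser, coeff_sser]
    rw [Finset.sum_range_succ' (fun n => coeff (R := ℚ) m (F1 n)) m,
        Finset.sum_range_succ' (fun n => coeff (R := ℚ) m (F1' n)) m]
    have hF10 : coeff (R := ℚ) m (F1 0) = coeff (R := ℚ) m (C (R := ℚ) (b 0)) := by
      rw [hF1def]; simp
    have hF1'0 : coeff (R := ℚ) m (F1' 0) = 0 := by rw [hF1'def]; simp
    have hsame : ∀ i, coeff (R := ℚ) m (F1' (i + 1)) = coeff (R := ℚ) m (F1 (i + 1)) := fun i => by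
      rw [hF1'def]; simp
    rw [hF10, hF1'0, Finset.sum_congr rfl fun i _ => hsame i]
    ring
  have hθg1 : theta g1 = (S1 - C (R := ℚ) (b 0)) * (1 + w) := by
    rw [hsub1, hg1def, theta_sser, sser_mul hF1'ord]
    apply sser_congr
    intro n
    cases n with
    | zero => rw [hG1def, hF1'def]; simp [theta_zero]
    | succ n =>
        rw [hG1def, hF1'def, hF1def]
        simp only [Nat.succ_ne_zero, if_false]
        rw [theta_C_mul, theta_pow t n, hθt]
        have hne : ((n + 1 : ℕ) : ℚ) ≠ 0 := Nat.cast_ne_zero.mpr (by omega)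
        have hc : C (R := ℚ) (b (n + 1) / ((n + 1 : ℕ) : ℚ)) * C (R := ℚ) (((n + 1 : ℕ)) : ℚ)
            = C (R := ℚ) (b (n + 1)) := by
          rw [← map_mul, div_mul_cancel₀ _ hne]
        calc C (R := ℚ) (b (n + 1) / ((n + 1 : ℕ) : ℚ)) * (C (R := ℚ) (((n + 1 : ℕ)) : ℚ) * t ^ n * (t * (1 + w)))
            = (C (R := ℚ) (b (n + 1) / ((n + 1 : ℕ) : ℚ)) * C (R := ℚ) (((n + 1 : ℕ)) : ℚ))
              * ((t ^ n * t) * (1 + w)) := by ring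
          _ = C (R := ℚ) (b (n + 1)) * (t ^ (n + 1) * (1 + w)) := by rw [hc, pow_succ]
          _ = C (R := ℚ) (b (n + 1)) * t ^ (n + 1) * (1 + w) := by ring
  set Ψ1 := g1 - C (R := ℚ) (1 / (p : ℚ)) * substPow p g1 with hΨ1def
  have hθΨ1 : theta Ψ1 = (S1 - C (R := ℚ) (b 0)) * (1 + w) - (S2 - C (R := ℚ) (b 0)) * (1 + W) := by
    rw [hΨ1def, theta_sub, theta_C_mul, theta_substPow hp0]
    have e3 : C (R := ℚ) (1 / (p : ℚ)) * (C (R := ℚ) (p : ℚ) * substPow p (theta g1))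
        = substPow p (theta g1) := by
      rw [← mul_assoc, ← map_mul, one_div, inv_mul_cancel₀ hpq, map_one, one_mul]
    rw [e3, hθg1, substPow_mul hp0, substPow_sub, substPow_C hp0, substPow_add,
      substPow_one hp0, ← hS2def]
  set Ψ : ℚ⟦X⟧ := C (R := ℚ) (b 0) * Ψ0 + Ψ1 with hΨdef
  have hθΨ : theta Ψ = S1 * (1 + w) - S2 * (1 + W) := by
    rw [hΨdef, theta_add, theta_C_mul, hΨ0w, hθΨ1]
    ring
  -- integrality of Ψ1 via the decomposition Q + R
  have hqq : ∀ n : ℕ, n ≠ 0 → PInt p ((b n - if p ∣ n then b (n / p) else 0) / (n : ℚ)) := by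
    intro n hn
    by_cases hd : p ∣ n
    · rw [if_pos hd]
      set r := n.factorization p with hr
      have hr1 : 1 ≤ r := by
        rw [hr]
        exact Nat.Prime.factorization_pos_of_dvd hp hn hd
      set ℓ := n / p ^ r with hℓ
      have hnl : p ^ r * ℓ = n := Nat.ordProj_mul_ordCompl_eq_self n p
      have hℓ1 : 1 ≤ ℓ := by
        rcases Nat.eq_zero_or_pos ℓ with h | h
        · rw [h, mul_zero] at hnl; omega
        · omega
      have hb1 : ℓ * p ^ r = n := by rw [mul_comm]; exact hnl
      have hb2 : ℓ * p ^ (r - 1) = n / p := by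
        have e : n = p * (ℓ * p ^ (r - 1)) := by
          rw [← hb1]
          have e' : p ^ r = p * p ^ (r - 1) := by
            conv_lhs => rw [show r = 1 + (r - 1) by omega]
            rw [pow_add, pow_one]
          rw [e']; ring
        rw [e, Nat.mul_div_cancel_left _ hp0]
      have hcc := hcong ℓ r hℓ1 hr1
      rw [hb1, hb2] at hcc
      refine pmem_div_nat hp hcc hn ?_
      rw [← hr]
    · rw [if_neg hd, sub_zero]
      refine pmem_div_nat hp (pmem_zero_iff.mpr (hb n)) hn ?_
      rw [Nat.factorization_eq_zero_of_not_dvd hd]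
  set Qf : ℕ → ℚ⟦X⟧ := fun n =>
    if n = 0 then 0 else C (R := ℚ) ((b n - if p ∣ n then b (n / p) else 0) / (n : ℚ)) * t ^ n
    with hQfdef
  set Af : ℕ → ℚ⟦X⟧ := fun n =>
    if n = 0 then 0 else C (R := ℚ) (b n / ((p : ℚ) * n)) * (t ^ p) ^ n with hAfdef
  set Bf : ℕ → ℚ⟦X⟧ := fun n =>
    if n = 0 then 0 else C (R := ℚ) (b n / ((p : ℚ) * n)) * T ^ n with hBfdef
  set Rf : ℕ → ℚ⟦X⟧ := fun n =>
    if n = 0 then 0 else C (R := ℚ) (b n / ((p : ℚ) * n)) * ((t ^ p) ^ n - T ^ n) with hRfdef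
  have hB : C (R := ℚ) (1 / (p : ℚ)) * substPow p g1 = sser Bf := by
    rw [hg1def, substPow_sser hp0 hG1ord, sser_C_mul]
    apply sser_congr
    intro n
    rw [hG1def, hBfdef]
    by_cases hn : n = 0
    · simp [hn, substPow_zero]
    · simp only [hn, if_false]
      rw [substPow_mul hp0, substPow_C hp0, substPow_pow hp0, ← hTdef, ← mul_assoc, ← map_mul]
      congr 2
      field_simp
  have hg1QA : g1 = sser Qf + sser Af := by
    have hA : ∀ m, coeff (R := ℚ) m g1 - coeff (R := ℚ) m (sser Qf) = coeff (R := ℚ) m (sser Af) := by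
      intro m
      rw [hg1def, coeff_sser, coeff_sser, coeff_sser, ← Finset.sum_sub_distrib]
      have step1 : ∀ n ∈ range (m + 1), coeff (R := ℚ) m (G1 n) - coeff (R := ℚ) m (Qf n)
          = (if p ∣ n then (if n = 0 then 0 else b (n / p) / (n : ℚ) * coeff (R := ℚ) m (t ^ n))
              else 0) := by
        intro n _
        rw [hG1def, hQfdef]
        by_cases hn : n = 0
        · subst hn; simp
        · simp only [hn, if_false]
          rw [coeff_C_mul, coeff_C_mul]
          by_cases hd : p ∣ n
          · rw [if_pos hd, if_pos hd]
            ring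
          · rw [if_neg hd, if_neg hd]
            ring
      rw [Finset.sum_congr rfl step1, sum_mult hp0]
      have step2 : ∀ q ∈ range (m / p + 1),
          (if p * q = 0 then 0 else b ((p * q) / p) / ((p * q : ℕ) : ℚ) * coeff (R := ℚ) m (t ^ (p * q)))
          = coeff (R := ℚ) m (Af q) := by
        intro q _
        rw [hAfdef]
        by_cases hq : q = 0
        · subst hq; simp
        · have hpq0 : p * q ≠ 0 := Nat.mul_ne_zero hpne hq
          simp only [hq, hpq0, if_false]
          rw [coeff_C_mul, Nat.mul_div_cancel_left q hp0, ← pow_mul]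
          push_cast
          ring
      rw [Finset.sum_congr rfl step2]
      apply Finset.sum_subset
      · exact Finset.range_subset_range.mpr (by have := Nat.div_le_self m p; omega)
      · intro q hq hq2
        simp only [Finset.mem_range] at hq hq2
        rw [hAfdef]
        have hq0 : q ≠ 0 := by
          intro hq0
          apply hq2
          rw [hq0]
          exact Nat.succ_pos _
        simp only [hq0, if_false]
        have h11 : m < q * p := (Nat.div_lt_iff_lt_mul hp0).mp (by omega)
        have h12 : q * p = p * q := Nat.mul_comm q p
        rw [coeff_C_mul, ← pow_mul, coeff_pow_eq_zero ht0 (by omega : m < p * q), mul_zero]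
    ext m
    rw [map_add]
    have := hA m
    linarith
  have hAB : sser Af - sser Bf = sser Rf := by
    rw [sser_sub]
    apply sser_congr
    intro n
    rw [hAfdef, hBfdef, hRfdef]
    by_cases hn : n = 0
    · simp [hn]
    · simp only [hn, if_false]
      rw [mul_sub]
  have hΨ1QR : Ψ1 = sser Qf + sser Rf := by
    rw [hΨ1def, hB, ← hAB, hg1QA]
    ring
  have hQint : SInt p (sser Qf) := by
    apply sint_sser hp
    intro n m
    rw [hQfdef]
    by_cases hn : n = 0
    · simp only [hn, if_pos rfl]; simpa using pint_zero hp
    · simp only [hn, if_false]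
      rw [coeff_C_mul]
      exact pint_mul hp (hqq n hn) (sint_pow hp ht n m)
  have hfrobT : SMem p 1 (t ^ p - T) := by rw [hTdef]; exact frob' hp ht
  have hRint : SInt p (sser Rf) := by
    apply sint_sser hp
    intro n m
    rw [hRfdef]
    by_cases hn : n = 0
    · simp only [hn, if_pos rfl]; simpa using pint_zero hp
    · simp only [hn, if_false]
      rw [coeff_C_mul]
      have hsm : SMem p (n.factorization p + 1) ((t ^ p) ^ n - T ^ n) :=
        smem_pow_all hp (sint_pow hp ht p) hTint hfrobT n hn
      have hx : PMem p (n.factorization p + 1) (b n * coeff (R := ℚ) m ((t ^ p) ^ n - T ^ n)) :=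
        pint_mul_pmem hp (hb n) (hsm m)
      have hfac : (p * n).factorization p ≤ n.factorization p + 1 := by
        rw [Nat.factorization_mul hpne hn]
        simp [Nat.Prime.factorization_self hp]
        omega
      have hdiv := pmem_div_nat hp hx (Nat.mul_ne_zero hpne hn) hfac
      have e10 : b n / ((p : ℚ) * n) * coeff (R := ℚ) m ((t ^ p) ^ n - T ^ n)
          = (b n * coeff (R := ℚ) m ((t ^ p) ^ n - T ^ n)) / ((p * n : ℕ) : ℚ) := by
        push_cast
        ring
      rw [e10]
      exact hdiv
  have hΨ1int : SInt p Ψ1 := by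
    rw [hΨ1QR]
    exact sint_add hp hQint hRint
  have hΨint : SInt p Ψ := by
    rw [hΨdef]
    exact sint_add hp (sint_mul hp (sint_C hp (hb 0)) hΨ0int) hΨ1int
  refine ⟨Ψ, hΨint, ?_⟩
  rw [hS1mk, hS2mk, hθt, hθT, hθΨ]
  ring
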